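/- Let K be a field and let R be the subalgebra { f ∈ K[x,y] : f(x,0) is a constant } of the polynomial ring K[x,y] (equivalently, R = K·1 + y·K[x,y], the K-span of 1 and all monomials divisible by y). Then R is not finitely generated as a K-algebra. -/

import Mathlib

/-- The substitution `y ↦ 0` on `K[x,y]` (with `x = X 0`, `y = X 1`). -/
noncomputable def substY0 (K : Type*) [Field K] :
    MvPolynomial (Fin 2) K →ₐ[K] MvPolynomial (Fin 2) K :=
  MvPolynomial.aeval (fun i => if i = 0 then MvPolynomial.X 0 else 0)

/-- The subalgebra `R = { f ∈ K[x,y] : f(x,0) is a constant } = K·1 + y·K[x,y]`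
of the polynomial ring `K[x,y]`. -/
noncomputable def Rsub (K : Type*) [Field K] : Subalgebra K (MvPolynomial (Fin 2) K) :=
  Subalgebra.comap (substY0 K) ⊥

open MvPolynomial

lemma single_of_snd_zero (d : Fin 2 →₀ ℕ) (h : d 1 = 0) : d = Finsupp.single 0 (d 0) := by
  ext i
  fin_cases i <;> simp [Finsupp.single_apply, h]

lemma coeff_substY0 (K : Type*) [Field K] (f : MvPolynomial (Fin 2) K) (a : ℕ) :
    coeff (Finsupp.single 0 a) (substY0 K f) = coeff (Finsupp.single 0 a) f := by
  rw [substY0, aeval_def, eval₂_eq', coeff_sum]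
  rw [show (∑ d ∈ f.support, coeff (Finsupp.single 0 a)
      ((algebraMap K (MvPolynomial (Fin 2) K)) (coeff d f) *
        ∏ i : Fin 2, (if i = 0 then X 0 else (0 : MvPolynomial (Fin 2) K)) ^ d i))
      = ∑ d ∈ f.support, (if d = Finsupp.single 0 a then coeff d f else 0) from ?_]
  · rw [Finset.sum_ite_eq' f.support (Finsupp.single 0 a) (fun d => coeff d f)]
    split
    · rfl
    · rename_i h
      exact (notMem_support_iff.mp h).symm
  · apply Finset.sum_congr rfl
    intro d _
    rw [Fin.prod_univ_two,
      show ((if (0:Fin 2) = 0 then X 0 else (0:MvPolynomial (Fin 2) K)) = X 0) from if_pos rfl,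
      show ((if (1:Fin 2) = 0 then X 0 else (0:MvPolynomial (Fin 2) K)) = 0) from if_neg (by decide)]
    by_cases h1 : d 1 = 0
    · have hd := single_of_snd_zero d h1
      rw [h1, pow_zero, mul_one, algebraMap_eq, X_pow_eq_monomial, C_mul_monomial, mul_one,
        coeff_monomial]
      by_cases he : d = Finsupp.single 0 a
      · have h0 : d 0 = a := by rw [he]; simp
        rw [if_pos he, if_pos (by rw [h0])]
      · rw [if_neg he, if_neg (fun hc => he (hd.trans hc))]
    · rw [zero_pow h1, mul_zero, mul_zero, coeff_zero, if_neg]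
      intro he
      apply h1
      rw [he]
      simp [Finsupp.single_apply]

/-- Elements of `Rsub` have no pure-`x` monomials of positive degree. -/
lemma coeff_eq_zero_of_mem_Rsub {K : Type*} [Field K] {f : MvPolynomial (Fin 2) K}
    (hf : f ∈ Rsub K) {p : Fin 2 →₀ ℕ} (hp1 : p 1 = 0) (hp : p ≠ 0) : coeff p f = 0 := by
  have hp0 : p 0 ≠ 0 := by
    intro h0
    exact hp (by rw [single_of_snd_zero p hp1, h0, Finsupp.single_zero])
  rw [Rsub, Subalgebra.mem_comap, Algebra.mem_bot] at hf
  obtain ⟨c, hc⟩ := hf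
  rw [single_of_snd_zero p hp1, ← coeff_substY0, ← hc, algebraMap_eq, coeff_C,
    if_neg (fun h => hp0 (by simpa [Finsupp.single_apply] using h.symm))]

/-- The subalgebra `R = K·1 + y·K[x,y]` of `K[x,y]` is not finitely generated as a
`K`-algebra.  (This algebra is the Hochschild cohomology ring modulo nilpotence of
Xu's counterexample algebra.) -/
theorem Rsub_not_finiteType (K : Type*) [Field K] :
    ¬ Algebra.FiniteType K (Rsub K) := by
  intro h
  obtain ⟨s, hs⟩ := (Subalgebra.fg_iff_finiteType (Rsub K)).mpr h
  set N : ℕ := (s.sup fun f => f.support.sup fun d => d 0) + 1 with hN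
  set m : Fin 2 →₀ ℕ := Finsupp.single 0 N + Finsupp.single 1 1 with hm
  have hm1 : m 1 = 1 := by simp [hm, Finsupp.single_apply]
  have hm0 : m 0 = N := by simp [hm, Finsupp.single_apply]
  have hmne : m ≠ 0 := by
    intro h0
    rw [h0] at hm1
    simp at hm1
  have hgen : ∀ g ∈ s, coeff m g = 0 := by
    intro g hg
    by_contra hc
    have h1 : m ∈ g.support := mem_support_iff.mpr hc
    have h2 : m 0 ≤ s.sup fun f => f.support.sup fun d => d 0 :=
      le_trans (Finset.le_sup (f := fun d => d 0) h1) (Finset.le_sup (f := fun f => f.support.sup fun d => d 0) hg)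
    omega
  let T : Subalgebra K (MvPolynomial (Fin 2) K) :=
    { carrier := {f | f ∈ Rsub K ∧ coeff m f = 0}
      mul_mem' := by
        rintro f g ⟨hf, hf2⟩ ⟨hg, hg2⟩
        refine ⟨mul_mem hf hg, ?_⟩
        rw [coeff_mul]
        apply Finset.sum_eq_zero
        rintro ⟨p, q⟩ hpq
        rw [Finset.HasAntidiagonal.mem_antidiagonal] at hpq
        have h1 : p 1 + q 1 = 1 := by
          have := congrFun (congrArg (↑· : (Fin 2 →₀ ℕ) → Fin 2 → ℕ) hpq) 1
          simpa [hm1] using this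
        by_cases hp1 : p 1 = 0
        · by_cases hp : p = 0
          · have : q = m := by rw [hp, zero_add] at hpq; exact hpq
            rw [this, hg2, mul_zero]
          · rw [coeff_eq_zero_of_mem_Rsub hf hp1 hp, zero_mul]
        · have hq1 : q 1 = 0 := by omega
          by_cases hq : q = 0
          · have : p = m := by rw [hq, add_zero] at hpq; exact hpq
            rw [this, hf2, zero_mul]
          · rw [coeff_eq_zero_of_mem_Rsub hg hq1 hq, mul_zero]
      one_mem' := by
        refine ⟨one_mem _, ?_⟩
        rw [show (1 : MvPolynomial (Fin 2) K) = C 1 from rfl, coeff_C, if_neg (fun h => hmne h.symm)]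
      add_mem' := by
        rintro f g ⟨hf, hf2⟩ ⟨hg, hg2⟩
        exact ⟨add_mem hf hg, by rw [coeff_add, hf2, hg2, add_zero]⟩
      algebraMap_mem' := by
        intro c
        refine ⟨Subalgebra.algebraMap_mem _ c, ?_⟩
        rw [algebraMap_eq, coeff_C, if_neg (fun h => hmne h.symm)] }
  have hsub : Algebra.adjoin K (s : Set (MvPolynomial (Fin 2) K)) ≤ T :=
    Algebra.adjoin_le fun g hg => ⟨hs ▸ Algebra.subset_adjoin hg, hgen g hg⟩
  have hx : (X 0 ^ N * X 1 : MvPolynomial (Fin 2) K) ∈ Rsub K := by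
    rw [Rsub, Subalgebra.mem_comap, map_mul, map_pow]
    have : substY0 K (X 1) = 0 := by
      rw [substY0, aeval_X, if_neg (by decide : ¬(1 : Fin 2) = 0)]
    rw [this, mul_zero]
    exact zero_mem _
  have hxT : (X 0 ^ N * X 1 : MvPolynomial (Fin 2) K) ∈ T := hsub (hs ▸ hx)
  have hco : coeff m (X 0 ^ N * X 1 : MvPolynomial (Fin 2) K) = 1 := by
    have hX1 : (X 1 : MvPolynomial (Fin 2) K) = monomial (Finsupp.single 1 1) 1 := by
      rw [← pow_one (X 1 : MvPolynomial (Fin 2) K), X_pow_eq_monomial]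
    rw [X_pow_eq_monomial, hX1, monomial_mul, coeff_monomial, if_pos rfl, one_mul]
  exact one_ne_zero (hco ▸ hxT.2)
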